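/- Let ψ be a continuous frame for H, w a continuous weight whose associated weight m := m_w is admissible, ‖R‖_{A_m} < ∞, and suppose ψ has property D[δ,m] with respect to a moderate admissible covering U = (U_i)_{i∈I} with finite-overlap constant N and cover constant C_{m,U}. Choose points x_i ∈ U_i and a partition of unity (φ_i)_{i∈I} subordinate to U (measurable, 0 ≤ φ_i ≤ 1, supp φ_i ⊂ U_i, Σ_i φ_i ≡ 1 on X). Set σ := max{C_{m,U}·‖R‖_{A_m}, ‖R‖_{A_m} + δ}. Then for each 1 ≤ p ≤ ∞ and every F ∈ L^p_w satisfying F = R(F) almost everywhere (where R(F)(x) := ∫_X F(y)R(x,y)dμ(y) is the continuous representative): ‖Σ_{i∈I} R(F)(x_i) χ_{U_i}‖_{L^p_w} ≤ N·σ·‖F‖_{L^p_w} and ‖Σ_{i∈I} R(F)(x_i) φ_i‖_{L^p_w} ≤ σ·‖F‖_{L^p_w}. -/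

import Mathlib

open MeasureTheory ENNReal
open scoped ENNReal NNReal

noncomputable section

local notation "⟪" x ", " y "⟫" => @inner ℂ _ _ x y

/-- The weight on `X × X` associated to a weight `w` on `X`. -/
def mw {X : Type*} (w : X → ℝ) (x y : X) : ℝ :=
  max (w x / w y) (w y / w x)

/-- The norm of the Banach algebra `A_m` of kernels on `X × X`. -/
def amNorm {X : Type*} [MeasurableSpace X] (μ : MeasureTheory.Measure X)
    (m K : X → X → ℝ) : ℝ≥0∞ :=
  max (essSup (fun x => ∫⁻ y, ENNReal.ofReal (|K x y| * m x y) ∂μ) μ)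
      (essSup (fun y => ∫⁻ x, ENNReal.ofReal (|K x y| * m x y) ∂μ) μ)

/-- The oscillation kernel `osc_U(x,y) = sup_{z ∈ Q_y} |R(x,y) − R(x,z)|`, where
`Q_y = ∪_{i : y ∈ U_i} U_i`. -/
def oscU {X I : Type*} (R : X → X → ℂ) (U : I → Set X) (x y : X) : ℝ :=
  sSup ((fun z => ‖R x y - R x z‖) '' ⋃ (i : I) (_ : y ∈ U i), U i)

/-- The `L^p_w`-norm (as a value in `ℝ≥0∞`). -/
def lpwNorm {X : Type*} [MeasurableSpace X] {E : Type*} [NormedAddCommGroup E]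
    (μ : MeasureTheory.Measure X) (w : X → ℝ) (p : ℝ≥0∞) (F : X → E) : ℝ≥0∞ :=
  MeasureTheory.eLpNorm (fun x => ‖F x‖ * w x) p μ

/-- A moderate admissible covering `U = (U_i)_{i∈I}` of `X`. -/
structure ModCover (X : Type*) [TopologicalSpace X] [MeasurableSpace X]
    (μ : MeasureTheory.Measure X) (I : Type*) where
  U : I → Set X
  measU : ∀ i, MeasurableSet (U i)
  relCompact : ∀ i, IsCompact (closure (U i))
  interiorNonempty : ∀ i, (interior (U i)).Nonempty
  covers : (⋃ i, U i) = Set.univ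
  N : ℕ
  overlapFin : ∀ j : I, {i : I | (U i ∩ U j).Nonempty}.Finite
  overlapBound : ∀ j : I, {i : I | (U i ∩ U j).Nonempty}.ncard ≤ N
  measLower : ℝ≥0∞
  measLowerPos : 0 < measLower
  lower : ∀ i, measLower ≤ μ (U i)
  finiteMeas : ∀ i, μ (U i) < ⊤
  Ctilde : ℝ≥0∞
  CtildeFin : Ctilde < ⊤
  moderate : ∀ i j, (U i ∩ U j).Nonempty → μ (U i) ≤ Ctilde * μ (U j)


/-- Auxiliary `L^p`-type functional for `ℝ≥0∞`-valued functions. -/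
def pN {X : Type*} [MeasurableSpace X] (μ : Measure X) (p : ℝ≥0∞) (f : X → ℝ≥0∞) : ℝ≥0∞ :=
  if p = ∞ then essSup f μ else (∫⁻ x, f x ^ p.toReal ∂μ) ^ (1 / p.toReal)

lemma pN_mono_ae {X : Type*} [MeasurableSpace X] {μ : Measure X} {p : ℝ≥0∞}
    {f g : X → ℝ≥0∞} (h : f ≤ᵐ[μ] g) : pN μ p f ≤ pN μ p g := by
  unfold pN
  split
  · exact essSup_mono_ae h
  · exact ENNReal.rpow_le_rpow
      (lintegral_mono_ae (h.mono fun x hx => ENNReal.rpow_le_rpow hx ENNReal.toReal_nonneg))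
      (by positivity)

lemma pN_congr_ae {X : Type*} [MeasurableSpace X] {μ : Measure X} {p : ℝ≥0∞}
    {f g : X → ℝ≥0∞} (h : f =ᵐ[μ] g) : pN μ p f = pN μ p g :=
  le_antisymm (pN_mono_ae h.le) (pN_mono_ae h.symm.le)

lemma eLpNorm_eq_pN {X : Type*} [MeasurableSpace X] {μ : Measure X} {E : Type*}
    [NormedAddCommGroup E] (g : X → E) (p : ℝ≥0∞) (hp : p ≠ 0) :
    eLpNorm g p μ = pN μ p (fun x => (‖g x‖₊ : ℝ≥0∞)) := by
  unfold pN
  by_cases h : p = ∞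
  · subst h; rw [if_pos rfl, eLpNorm_exponent_top]; rfl
  · rw [if_neg h]; rw [eLpNorm_eq_lintegral_rpow_enorm_toReal hp h]; rfl

/-- Schur test, `ℝ≥0∞` version, for all `1 ≤ p ≤ ∞` simultaneously. -/
lemma schur_test {X : Type*} [MeasurableSpace X] (μ : Measure X) [SigmaFinite μ]
    (κ : X → X → ℝ≥0∞) (hκ : Measurable (Function.uncurry κ))
    (v : X → ℝ≥0∞) (hv : AEMeasurable v μ)
    (C : ℝ≥0∞) (hCt : C ≠ ⊤)
    (hrow : ∀ᵐ x ∂μ, ∫⁻ y, κ x y ∂μ ≤ C)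
    (hcol : ∀ᵐ y ∂μ, ∫⁻ x, κ x y ∂μ ≤ C)
    (p : ℝ≥0∞) (hp : 1 ≤ p) :
    pN μ p (fun x => ∫⁻ y, κ x y * v y ∂μ) ≤ C * pN μ p v := by
  -- reduce to measurable v
  suffices H : ∀ v : X → ℝ≥0∞, Measurable v →
      pN μ p (fun x => ∫⁻ y, κ x y * v y ∂μ) ≤ C * pN μ p v by
    have hpt : ∀ x, ∫⁻ y, κ x y * v y ∂μ = ∫⁻ y, κ x y * (hv.mk v) y ∂μ := fun x =>
      lintegral_congr_ae (hv.ae_eq_mk.mono fun y hy => by dsimp only; rw [hy])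
    rw [show (fun x => ∫⁻ y, κ x y * v y ∂μ)
        = fun x => ∫⁻ y, κ x y * (hv.mk v) y ∂μ from funext hpt,
      pN_congr_ae hv.ae_eq_mk]
    exact H _ hv.measurable_mk
  clear hv v
  intro v hvm
  have hκx : ∀ x, Measurable (κ x) := fun x => hκ.of_uncurry_left
  have hκy : ∀ y, Measurable (fun x => κ x y) := fun y => hκ.comp (measurable_prodMk_right)
  by_cases hptop : p = ∞
  · subst hptop
    rw [pN, pN, if_pos rfl, if_pos rfl]
    refine essSup_le_of_ae_le _ ?_
    filter_upwards [hrow] with x hx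
    calc ∫⁻ y, κ x y * v y ∂μ
        ≤ ∫⁻ y, κ x y * essSup v μ ∂μ := lintegral_mono_ae
          ((ENNReal.ae_le_essSup v).mono fun y hy => mul_le_mul_right hy _)
      _ = (∫⁻ y, κ x y ∂μ) * essSup v μ := lintegral_mul_const _ (hκx x)
      _ ≤ C * essSup v μ := mul_le_mul_left hx _
  · have hp0 : p ≠ 0 := fun h => by simp [h] at hp
    have hr1 : 1 ≤ p.toReal := by
      have := ENNReal.toReal_mono hptop hp; simpa using this
    set r := p.toReal with hrdef
    have hr0 : (0:ℝ) < r := lt_of_lt_of_le one_pos hr1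
    rw [pN, pN, if_neg hptop, if_neg hptop, ← hrdef]
    by_cases hrone : r = 1
    · simp only [hrone, ENNReal.rpow_one, one_div_one]
      rw [lintegral_lintegral_swap
        ((hκ.mul (hvm.comp measurable_snd)).aemeasurable)]
      calc ∫⁻ y, ∫⁻ x, κ x y * v y ∂μ ∂μ
          = ∫⁻ y, (∫⁻ x, κ x y ∂μ) * v y ∂μ := by
            refine lintegral_congr fun y => ?_
            rw [lintegral_mul_const _ (hκy y)]
        _ ≤ ∫⁻ y, C * v y ∂μ := lintegral_mono_ae
            (hcol.mono fun y hy => mul_le_mul_left hy _)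
        _ = C * ∫⁻ y, v y ∂μ := lintegral_const_mul' _ _ hCt
    · have hrgt : 1 < r := lt_of_le_of_ne hr1 (Ne.symm hrone)
      have hconj : r.HolderConjugate r.conjExponent := Real.HolderConjugate.conjExponent hrgt
      set q := r.conjExponent with hqdef
      have hq0 : (0:ℝ) < q := hconj.symm.pos
      have hsum : 1/q + 1/r = 1 := by
        rw [one_div, one_div]; exact hconj.symm.inv_add_inv_eq_one
      have step1 : ∀ᵐ x ∂μ, (∫⁻ y, κ x y * v y ∂μ) ≤
          C ^ (1/q) * (∫⁻ y, κ x y * v y ^ r ∂μ) ^ (1/r) := by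
        filter_upwards [hrow] with x hx
        have h1 : ∀ y, κ x y * v y
            = ((fun y => κ x y ^ (1/q)) * fun y => κ x y ^ (1/r) * v y) y := by
          intro y
          simp only [Pi.mul_apply]
          rw [← mul_assoc, ← ENNReal.rpow_add_of_nonneg _ _ (by positivity) (by positivity),
            hsum, ENNReal.rpow_one]
        calc ∫⁻ y, κ x y * v y ∂μ
            = ∫⁻ y, ((fun y => κ x y ^ (1/q)) * fun y => κ x y ^ (1/r) * v y) y ∂μ :=
              lintegral_congr h1
          _ ≤ (∫⁻ y, (κ x y ^ (1/q)) ^ q ∂μ) ^ (1/q) *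
              (∫⁻ y, (κ x y ^ (1/r) * v y) ^ r ∂μ) ^ (1/r) :=
              ENNReal.lintegral_mul_le_Lp_mul_Lq μ hconj.symm
                (((hκx x).pow_const _).aemeasurable)
                ((((hκx x).pow_const _).mul hvm).aemeasurable)
          _ = (∫⁻ y, κ x y ∂μ) ^ (1/q) * (∫⁻ y, κ x y * v y ^ r ∂μ) ^ (1/r) := by
              have e1 : 1/q * q = 1 := by field_simp
              have e2 : 1/r * r = 1 := by field_simp
              congr 1
              · congr 1; refine lintegral_congr fun y => ?_
                rw [← ENNReal.rpow_mul, e1, ENNReal.rpow_one]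
              · congr 1; refine lintegral_congr fun y => ?_
                rw [ENNReal.mul_rpow_of_nonneg _ _ hr0.le, ← ENNReal.rpow_mul, e2,
                  ENNReal.rpow_one]
          _ ≤ C ^ (1/q) * (∫⁻ y, κ x y * v y ^ r ∂μ) ^ (1/r) :=
              mul_le_mul_left (ENNReal.rpow_le_rpow hx (by positivity)) _
      have step2 : (∫⁻ x, (∫⁻ y, κ x y * v y ∂μ) ^ r ∂μ) ≤
          C ^ (r/q) * (C * ∫⁻ y, v y ^ r ∂μ) := by
        calc ∫⁻ x, (∫⁻ y, κ x y * v y ∂μ) ^ r ∂μ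
            ≤ ∫⁻ x, C ^ (r/q) * (∫⁻ y, κ x y * v y ^ r ∂μ) ∂μ := by
              refine lintegral_mono_ae (step1.mono fun x hx => ?_)
              calc (∫⁻ y, κ x y * v y ∂μ) ^ r
                  ≤ (C ^ (1/q) * (∫⁻ y, κ x y * v y ^ r ∂μ) ^ (1/r)) ^ r :=
                    ENNReal.rpow_le_rpow hx hr0.le
                _ = C ^ (r/q) * (∫⁻ y, κ x y * v y ^ r ∂μ) := by
                    have e1 : 1/q * r = r/q := by ring
                    have e2 : 1/r * r = 1 := by field_simp
                    rw [ENNReal.mul_rpow_of_nonneg _ _ hr0.le, ← ENNReal.rpow_mul,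
                      ← ENNReal.rpow_mul, e1, e2, ENNReal.rpow_one]
          _ = C ^ (r/q) * ∫⁻ x, ∫⁻ y, κ x y * v y ^ r ∂μ ∂μ :=
              lintegral_const_mul' _ _
                (ENNReal.rpow_ne_top_of_nonneg (by positivity) hCt)
          _ ≤ C ^ (r/q) * (C * ∫⁻ y, v y ^ r ∂μ) := by
              refine mul_le_mul_right ?_ _
              rw [lintegral_lintegral_swap
                ((hκ.mul ((hvm.comp measurable_snd).pow_const r)).aemeasurable)]
              calc ∫⁻ y, ∫⁻ x, κ x y * v y ^ r ∂μ ∂μ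
                  = ∫⁻ y, (∫⁻ x, κ x y ∂μ) * v y ^ r ∂μ := by
                    refine lintegral_congr fun y => ?_
                    rw [lintegral_mul_const _ (hκy y)]
                _ ≤ ∫⁻ y, C * v y ^ r ∂μ := lintegral_mono_ae
                    (hcol.mono fun y hy => mul_le_mul_left hy _)
                _ = C * ∫⁻ y, v y ^ r ∂μ := lintegral_const_mul' _ _ hCt
      calc (∫⁻ x, (∫⁻ y, κ x y * v y ∂μ) ^ r ∂μ) ^ (1/r)
          ≤ (C ^ (r/q) * (C * ∫⁻ y, v y ^ r ∂μ)) ^ (1/r) :=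
            ENNReal.rpow_le_rpow step2 (by positivity)
        _ = C ^ (r/q * (1/r)) * (C ^ (1/r) * (∫⁻ y, v y ^ r ∂μ) ^ (1/r)) := by
            rw [ENNReal.mul_rpow_of_nonneg _ _ (by positivity),
              ENNReal.mul_rpow_of_nonneg _ _ (by positivity), ← ENNReal.rpow_mul]
        _ = C * (∫⁻ y, v y ^ r ∂μ) ^ (1/r) := by
            have e3 : r/q * (1/r) = 1/q := by field_simp
            rw [e3, ← mul_assoc,
              ← ENNReal.rpow_add_of_nonneg _ _ (by positivity) (by positivity),
              hsum, ENNReal.rpow_one]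

lemma ofReal_norm_eq_coe_nnnorm {E : Type*} [NormedAddCommGroup E] (a : E) :
    ENNReal.ofReal ‖a‖ = (‖a‖₊ : ℝ≥0∞) := ofReal_norm a

lemma enorm_tsum_le' {ι E : Type*} [NormedAddCommGroup E] [CompleteSpace E] (g : ι → E) :
    (‖∑' i, g i‖₊ : ℝ≥0∞) ≤ ∑' i, (‖g i‖₊ : ℝ≥0∞) := by
  by_cases h : (∑' i, (‖g i‖₊ : ℝ≥0∞)) = ⊤
  · simp [h]
  · have hsum : Summable fun i => ‖g i‖₊ := ENNReal.tsum_coe_ne_top_iff_summable.mp h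
    have hsum' : Summable fun i => ‖g i‖ := by
      simpa using NNReal.summable_coe.mpr hsum
    calc (‖∑' i, g i‖₊ : ℝ≥0∞) = ENNReal.ofReal ‖∑' i, g i‖ :=
        (ofReal_norm_eq_coe_nnnorm _).symm
      _ ≤ ENNReal.ofReal (∑' i, ‖g i‖) :=
        ENNReal.ofReal_le_ofReal (norm_tsum_le_tsum_norm hsum')
      _ = ∑' i, (‖g i‖₊ : ℝ≥0∞) := by
        rw [ENNReal.ofReal_tsum_of_nonneg (fun i => norm_nonneg _) hsum']
        exact tsum_congr fun i => ofReal_norm_eq_coe_nnnorm _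


/-- Sampling estimates for functions in the reproducing kernel subspace
`R(L^p_w)`:  `‖∑ᵢ R(F)(xᵢ) χ_{Uᵢ}‖_{L^p_w} ≤ N·σ·‖F‖_{L^p_w}` and
`‖∑ᵢ R(F)(xᵢ) φᵢ‖_{L^p_w} ≤ σ·‖F‖_{L^p_w}`, with
`σ = max{C_{m,U}‖R‖_{A_m}, ‖R‖_{A_m} + δ}`. -/

theorem sampling_estimates_on_RY
    {X : Type*} [TopologicalSpace X] [T2Space X] [LocallyCompactSpace X]
    [SigmaCompactSpace X] [MeasurableSpace X] [BorelSpace X]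
    (μ : MeasureTheory.Measure X) [μ.Regular] [μ.IsOpenPosMeasure]
    {H : Type*} [NormedAddCommGroup H] [InnerProductSpace ℂ H] [CompleteSpace H]
    [TopologicalSpace.SeparableSpace H]
    (ψ : X → H)
    (hcont : ∀ f : H, Continuous fun x => ⟪ψ x, f⟫)
    (C₁ C₂ : ℝ) (hC₁ : 0 < C₁) (hC₁₂ : C₁ ≤ C₂)
    (hInt : ∀ f : H, Integrable (fun x => ‖⟪ψ x, f⟫‖ ^ 2) μ)
    (hlow : ∀ f : H, C₁ * ‖f‖ ^ 2 ≤ ∫ x, ‖⟪ψ x, f⟫‖ ^ 2 ∂μ)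
    (hup : ∀ f : H, ∫ x, ‖⟪ψ x, f⟫‖ ^ 2 ∂μ ≤ C₂ * ‖f‖ ^ 2)
    (S : H →L[ℂ] H)
    (hS : ∀ f g : H, ⟪g, S f⟫ = ∫ x, ⟪ψ x, f⟫ * ⟪g, ψ x⟫ ∂μ)
    (Sinv : H →L[ℂ] H)
    (hleft : ∀ f, Sinv (S f) = f) (hright : ∀ f, S (Sinv f) = f)
    (w : X → ℝ) (hw : Continuous w) (hwpos : ∀ x, 0 < w x)
    (hR : amNorm μ (mw w) (fun x y => ‖⟪Sinv (ψ x), ψ y⟫‖) < ⊤)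
    {I : Type*} [Countable I]
    (𝒰 : ModCover X μ I)
    (CmU : ℝ) (hcover : ∀ i, ∀ x ∈ 𝒰.U i, ∀ y ∈ 𝒰.U i, mw w x y ≤ CmU)
    (δ : ℝ) (hδ : 0 < δ)
    (hosc : amNorm μ (mw w) (oscU (fun x y => ⟪Sinv (ψ x), ψ y⟫) 𝒰.U) <
      ENNReal.ofReal δ)
    -- sampling points and a partition of unity subordinate to `U`
    (pt : I → X) (hpt : ∀ i, pt i ∈ 𝒰.U i)
    (φ : I → X → ℝ) (hφmeas : ∀ i, Measurable (φ i))
    (hφ0 : ∀ i x, 0 ≤ φ i x) (hφ1 : ∀ i x, φ i x ≤ 1)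
    (hφsupp : ∀ i, Function.support (φ i) ⊆ 𝒰.U i)
    (hφsum : ∀ x, HasSum (fun i => φ i x) 1) :
    ∀ p : ℝ≥0∞, 1 ≤ p →
      ∀ F : X → ℂ, AEStronglyMeasurable F μ → lpwNorm μ w p F < ⊤ →
        F =ᵐ[μ] (fun x => ∫ y, F y * ⟪Sinv (ψ x), ψ y⟫ ∂μ) →
        lpwNorm μ w p (fun x => ∑' i, (∫ y, F y * ⟪Sinv (ψ (pt i)), ψ y⟫ ∂μ) *
            (𝒰.U i).indicator (fun _ => (1 : ℂ)) x) ≤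
          (𝒰.N : ℝ≥0∞) *
            max (ENNReal.ofReal CmU * amNorm μ (mw w) (fun x y => ‖⟪Sinv (ψ x), ψ y⟫‖))
              (amNorm μ (mw w) (fun x y => ‖⟪Sinv (ψ x), ψ y⟫‖) + ENNReal.ofReal δ) *
            lpwNorm μ w p F ∧
        lpwNorm μ w p (fun x => ∑' i, (∫ y, F y * ⟪Sinv (ψ (pt i)), ψ y⟫ ∂μ) *
            (φ i x : ℂ)) ≤
          max (ENNReal.ofReal CmU * amNorm μ (mw w) (fun x y => ‖⟪Sinv (ψ x), ψ y⟫‖))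
              (amNorm μ (mw w) (fun x y => ‖⟪Sinv (ψ x), ψ y⟫‖) + ENNReal.ofReal δ) *
            lpwNorm μ w p F := by
  intro p hp F hFmeas _hFfin _hFrep
  have hp0 : p ≠ 0 := fun h => by simp [h] at hp
  set R' : X → X → ℂ := fun x y => ⟪Sinv (ψ x), ψ y⟫ with hR'def
  have hconv : ∀ a b : X, (⟪Sinv (ψ a), ψ b⟫ : ℂ) = R' a b := fun a b => by rw [hR'def]
  simp only [hconv] at hR hosc ⊢
  -- self-adjointness of S and Sinv
  have hSsa : ∀ f g : H, ⟪S g, f⟫ = ⟪g, S f⟫ := by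
    intro f g
    calc ⟪S g, f⟫ = starRingEnd ℂ ⟪f, S g⟫ := (inner_conj_symm _ _).symm
      _ = starRingEnd ℂ (∫ x, ⟪ψ x, g⟫ * ⟪f, ψ x⟫ ∂μ) := by rw [hS g f]
      _ = ∫ x, starRingEnd ℂ (⟪ψ x, g⟫ * ⟪f, ψ x⟫) ∂μ := integral_conj.symm
      _ = ∫ x, ⟪ψ x, f⟫ * ⟪g, ψ x⟫ ∂μ := by
          congr 1; funext x
          rw [map_mul, inner_conj_symm, inner_conj_symm, mul_comm]
      _ = ⟪g, S f⟫ := (hS f g).symm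
  have hSinvsa : ∀ a b : H, ⟪Sinv a, b⟫ = ⟪a, Sinv b⟫ := by
    intro a b
    calc ⟪Sinv a, b⟫ = ⟪Sinv a, S (Sinv b)⟫ := by rw [hright]
      _ = ⟪S (Sinv a), Sinv b⟫ := (hSsa (Sinv b) (Sinv a)).symm
      _ = ⟪a, Sinv b⟫ := by rw [hright]
  have hconjR : ∀ x y, R' y x = starRingEnd ℂ (R' x y) := by
    intro x y
    calc R' y x = ⟪Sinv (ψ y), ψ x⟫ := by rw [hR'def]
      _ = ⟪ψ y, Sinv (ψ x)⟫ := hSinvsa _ _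
      _ = starRingEnd ℂ ⟪Sinv (ψ x), ψ y⟫ := (inner_conj_symm _ _).symm
      _ = starRingEnd ℂ (R' x y) := by rw [hR'def]
  have hRcont2 : ∀ x, Continuous (fun y => R' x y) := by
    intro x
    have he : (fun y => R' x y) = fun y => starRingEnd ℂ ⟪ψ y, Sinv (ψ x)⟫ := by
      funext y; rw [hR'def]; exact (inner_conj_symm _ _).symm
    rw [he]
    exact Complex.continuous_conj.comp (hcont _)
  have hRcont1 : ∀ y, Continuous (fun x => R' x y) := by
    intro y
    have he : (fun x => R' x y) = fun x => ⟪ψ x, Sinv (ψ y)⟫ := by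
      funext x; rw [hR'def]; exact hSinvsa _ _
    rw [he]; exact hcont _
  -- oscillation facts
  have hoscnn : ∀ y x, 0 ≤ oscU R' 𝒰.U y x := by
    intro y x
    refine Real.sSup_nonneg ?_
    rintro a ⟨z, _, rfl⟩
    positivity
  have hcovx : ∀ x : X, ∃ j, x ∈ 𝒰.U j := by
    intro x
    have hx : x ∈ ⋃ i, 𝒰.U i := by rw [𝒰.covers]; trivial
    simpa using hx
  have hosc3 : ∀ i x y, x ∈ 𝒰.U i →
      (‖R' (pt i) y‖₊ : ℝ≥0∞) ≤ (‖R' x y‖₊ : ℝ≥0∞) + ENNReal.ofReal (oscU R' 𝒰.U y x) := by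
    intro i x y hx
    have hmem : pt i ∈ ⋃ (j : I) (_ : x ∈ 𝒰.U j), 𝒰.U j := Set.mem_biUnion hx (hpt i)
    obtain ⟨j₀, hj₀⟩ := hcovx x
    have hfin : {j : I | x ∈ 𝒰.U j}.Finite :=
      (𝒰.overlapFin j₀).subset fun j hj => ⟨x, hj, hj₀⟩
    have hQsub : (⋃ (j : I) (_ : x ∈ 𝒰.U j), 𝒰.U j) ⊆
        ⋃ j ∈ {j : I | x ∈ 𝒰.U j}, closure (𝒰.U j) :=
      Set.iUnion₂_subset fun j hj =>
        subset_trans subset_closure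
          (Set.subset_biUnion_of_mem (u := fun j => closure (𝒰.U j))
            (show j ∈ {j : I | x ∈ 𝒰.U j} from hj))
    have hcpt : IsCompact (⋃ j ∈ {j : I | x ∈ 𝒰.U j}, closure (𝒰.U j)) :=
      hfin.isCompact_biUnion fun j _ => 𝒰.relCompact j
    have hbdd : BddAbove ((fun z => ‖R' y x - R' y z‖) ''
        ⋃ (j : I) (_ : x ∈ 𝒰.U j), 𝒰.U j) := by
      have hb : BddAbove ((fun z => ‖R' y x - R' y z‖) ''
          ⋃ j ∈ {j : I | x ∈ 𝒰.U j}, closure (𝒰.U j)) :=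
        (hcpt.image ((continuous_const.sub (hRcont2 y)).norm)).bddAbove
      exact hb.mono (Set.image_mono hQsub)
    have h1 : ‖R' y x - R' y (pt i)‖ ≤ oscU R' 𝒰.U y x :=
      le_csSup hbdd ⟨pt i, hmem, rfl⟩
    have h2 : ‖R' (pt i) y - R' x y‖ = ‖R' y x - R' y (pt i)‖ := by
      rw [hconjR y (pt i), hconjR y x, ← map_sub, RCLike.norm_conj, norm_sub_rev]
    have h3 : ‖R' (pt i) y‖ - ‖R' x y‖ ≤ ‖R' y x - R' y (pt i)‖ :=
      h2 ▸ norm_sub_norm_le _ _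
    have h4 : ‖R' (pt i) y‖ ≤ ‖R' x y‖ + oscU R' 𝒰.U y x := by linarith
    rw [← ofReal_norm_eq_coe_nnnorm, ← ofReal_norm_eq_coe_nnnorm,
      ← ENNReal.ofReal_add (norm_nonneg _) (hoscnn y x)]
    exact ENNReal.ofReal_le_ofReal h4
  -- constants
  set A := amNorm μ (mw w) (fun x y => ‖R' x y‖) with hAdef
  set B := amNorm μ (mw w) (oscU R' 𝒰.U) with hBdef
  set σ := max (ENNReal.ofReal CmU * A) (A + ENNReal.ofReal δ) with hσdef
  have hσtop : σ ≠ ⊤ := by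
    rw [hσdef]
    refine (max_lt ?_ ?_).ne
    · exact ENNReal.mul_lt_top ENNReal.ofReal_lt_top hR
    · exact ENNReal.add_lt_top.mpr ⟨hR, ENNReal.ofReal_lt_top⟩
  have hBδ : B ≤ ENNReal.ofReal δ := hosc.le
  have hABσ : A + B ≤ σ := by
    rw [hσdef]
    exact le_trans (add_le_add_right hBδ _) (le_max_right _ _)
  -- a.e. bounds from the essential suprema
  have haeR1 : ∀ᵐ x ∂μ, ∫⁻ y, ENNReal.ofReal (|‖R' x y‖| * mw w x y) ∂μ ≤ A := by
    filter_upwards [ENNReal.ae_le_essSup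
      (fun x => ∫⁻ y, ENNReal.ofReal (|‖R' x y‖| * mw w x y) ∂μ)] with x hx
    exact hx.trans (le_max_left _ _)
  have haeR2 : ∀ᵐ y ∂μ, ∫⁻ x, ENNReal.ofReal (|‖R' x y‖| * mw w x y) ∂μ ≤ A := by
    filter_upwards [ENNReal.ae_le_essSup
      (fun y => ∫⁻ x, ENNReal.ofReal (|‖R' x y‖| * mw w x y) ∂μ)] with y hy
    exact hy.trans (le_max_right _ _)
  have haeO2 : ∀ᵐ x ∂μ, ∫⁻ y, ENNReal.ofReal (|oscU R' 𝒰.U y x| * mw w y x) ∂μ ≤ B := by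
    filter_upwards [ENNReal.ae_le_essSup
      (fun x => ∫⁻ y, ENNReal.ofReal (|oscU R' 𝒰.U y x| * mw w y x) ∂μ)] with x hx
    exact hx.trans (le_max_right _ _)
  have haeO1 : ∀ᵐ y ∂μ, ∫⁻ x, ENNReal.ofReal (|oscU R' 𝒰.U y x| * mw w y x) ∂μ ≤ B := by
    filter_upwards [ENNReal.ae_le_essSup
      (fun y => ∫⁻ x, ENNReal.ofReal (|oscU R' 𝒰.U y x| * mw w y x) ∂μ)] with y hy
    exact hy.trans (le_max_left _ _)
  -- weight facts
  have hmwnn : ∀ x y, 0 ≤ mw w x y := fun x y =>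
    le_trans (div_nonneg (hwpos x).le (hwpos y).le) (le_max_left _ _)
  have hmwsymm : ∀ x y, mw w x y = mw w y x := fun x y => max_comm _ _
  have hmw1 : ∀ x y, w x ≤ mw w x y * w y := by
    intro x y
    have h : w x / w y ≤ mw w x y := le_max_left _ _
    calc w x = w x / w y * w y := (div_mul_cancel₀ _ (hwpos y).ne').symm
      _ ≤ mw w x y * w y := mul_le_mul_of_nonneg_right h (hwpos y).le
  have hmwcont : Continuous (Function.uncurry (mw w)) := by
    refine Continuous.max ?_ ?_
    · exact (hw.comp continuous_fst).div (hw.comp continuous_snd) fun q => (hwpos _).ne'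
    · exact (hw.comp continuous_snd).div (hw.comp continuous_fst) fun q => (hwpos _).ne'
  have hmwconty : ∀ x, Continuous (fun y => mw w x y) := fun x =>
    (continuous_const.div hw fun y => (hwpos y).ne').max (hw.div_const _)
  have hmwcontx : ∀ y, Continuous (fun x => mw w x y) := fun y =>
    (hw.div_const _).max (continuous_const.div hw fun x => (hwpos x).ne')
  have hvmeas : AEMeasurable (fun y => (‖F y‖₊ : ℝ≥0∞) * ENNReal.ofReal (w y)) μ :=
    hFmeas.enorm.mul (ENNReal.measurable_ofReal.comp hw.measurable).aemeasurable
  -- the key estimate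
  have key : ∀ c₀ : ℝ≥0∞, c₀ ≠ ⊤ → ∀ k : X → X → ℝ≥0∞,
      Measurable (Function.uncurry k) →
      (∀ x y, k x y ≤ c₀ * ((‖R' x y‖₊ : ℝ≥0∞) + ENNReal.ofReal (oscU R' 𝒰.U y x))) →
      ∀ G : X → ℂ, (∀ x, (‖G x‖₊ : ℝ≥0∞) ≤ ∫⁻ y, k x y * (‖F y‖₊ : ℝ≥0∞) ∂μ) →
      lpwNorm μ w p G ≤ c₀ * σ * lpwNorm μ w p F := by
    intro c₀ hc₀ k hk hkb G hG
    have hκmeas : Measurable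
        (Function.uncurry (fun x y => k x y * ENNReal.ofReal (mw w x y))) :=
      hk.mul (ENNReal.measurable_ofReal.comp (Measurable.max
        ((hw.measurable.comp measurable_fst).div (hw.measurable.comp measurable_snd))
        ((hw.measurable.comp measurable_snd).div (hw.measurable.comp measurable_fst))))
    have hκb : ∀ x y, k x y * ENNReal.ofReal (mw w x y) ≤ c₀ *
        (ENNReal.ofReal (|‖R' x y‖| * mw w x y)
          + ENNReal.ofReal (|oscU R' 𝒰.U y x| * mw w y x)) := by
      intro x y
      have e1 : ENNReal.ofReal (|‖R' x y‖| * mw w x y)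
          = (‖R' x y‖₊ : ℝ≥0∞) * ENNReal.ofReal (mw w x y) := by
        rw [abs_norm, ENNReal.ofReal_mul (norm_nonneg _), ofReal_norm_eq_coe_nnnorm]
      have e2 : ENNReal.ofReal (|oscU R' 𝒰.U y x| * mw w y x)
          = ENNReal.ofReal (oscU R' 𝒰.U y x) * ENNReal.ofReal (mw w x y) := by
        rw [abs_of_nonneg (hoscnn y x), hmwsymm y x, ENNReal.ofReal_mul (hoscnn y x)]
      rw [e1, e2, ← add_mul, ← mul_assoc]
      exact mul_le_mul_left (hkb x y) _
    have hmeasR2 : ∀ x, Measurable (fun y => ENNReal.ofReal (|‖R' x y‖| * mw w x y)) :=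
      fun x => ENNReal.measurable_ofReal.comp
        (((hRcont2 x).norm.abs.mul (hmwconty x)).measurable)
    have hmeasR1 : ∀ y, Measurable (fun x => ENNReal.ofReal (|‖R' x y‖| * mw w x y)) :=
      fun y => ENNReal.measurable_ofReal.comp
        (((hRcont1 y).norm.abs.mul (hmwcontx y)).measurable)
    have hrow : ∀ᵐ x ∂μ, ∫⁻ y, k x y * ENNReal.ofReal (mw w x y) ∂μ ≤ c₀ * σ := by
      filter_upwards [haeR1, haeO2] with x h1 h2
      calc ∫⁻ y, k x y * ENNReal.ofReal (mw w x y) ∂μ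
          ≤ ∫⁻ y, c₀ * (ENNReal.ofReal (|‖R' x y‖| * mw w x y)
              + ENNReal.ofReal (|oscU R' 𝒰.U y x| * mw w y x)) ∂μ :=
            lintegral_mono fun y => hκb x y
        _ = c₀ * ((∫⁻ y, ENNReal.ofReal (|‖R' x y‖| * mw w x y) ∂μ)
              + ∫⁻ y, ENNReal.ofReal (|oscU R' 𝒰.U y x| * mw w y x) ∂μ) := by
            rw [lintegral_const_mul' _ _ hc₀, lintegral_add_left (hmeasR2 x)]
        _ ≤ c₀ * (A + B) := mul_le_mul_right (add_le_add h1 h2) _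
        _ ≤ c₀ * σ := mul_le_mul_right hABσ _
    have hcol : ∀ᵐ y ∂μ, ∫⁻ x, k x y * ENNReal.ofReal (mw w x y) ∂μ ≤ c₀ * σ := by
      filter_upwards [haeR2, haeO1] with y h1 h2
      calc ∫⁻ x, k x y * ENNReal.ofReal (mw w x y) ∂μ
          ≤ ∫⁻ x, c₀ * (ENNReal.ofReal (|‖R' x y‖| * mw w x y)
              + ENNReal.ofReal (|oscU R' 𝒰.U y x| * mw w y x)) ∂μ :=
            lintegral_mono fun x => hκb x y
        _ = c₀ * ((∫⁻ x, ENNReal.ofReal (|‖R' x y‖| * mw w x y) ∂μ)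
              + ∫⁻ x, ENNReal.ofReal (|oscU R' 𝒰.U y x| * mw w y x) ∂μ) := by
            rw [lintegral_const_mul' _ _ hc₀, lintegral_add_left (hmeasR1 y)]
        _ ≤ c₀ * (A + B) := mul_le_mul_right (add_le_add h1 h2) _
        _ ≤ c₀ * σ := mul_le_mul_right hABσ _
    have hmain := schur_test μ (fun x y => k x y * ENNReal.ofReal (mw w x y)) hκmeas
      (fun y => (‖F y‖₊ : ℝ≥0∞) * ENNReal.ofReal (w y)) hvmeas (c₀ * σ)
      (ENNReal.mul_ne_top hc₀ hσtop) hrow hcol p hp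
    have hGle : lpwNorm μ w p G ≤ pN μ p (fun x => ∫⁻ y,
        (k x y * ENNReal.ofReal (mw w x y)) *
          ((‖F y‖₊ : ℝ≥0∞) * ENNReal.ofReal (w y)) ∂μ) := by
      rw [lpwNorm, eLpNorm_eq_pN _ p hp0]
      refine pN_mono_ae (Filter.Eventually.of_forall fun x => ?_)
      calc ((‖‖G x‖ * w x‖₊ : ℝ≥0) : ℝ≥0∞)
          = (‖G x‖₊ : ℝ≥0∞) * ENNReal.ofReal (w x) := by
            rw [← ofReal_norm_eq_coe_nnnorm,
              Real.norm_of_nonneg (mul_nonneg (norm_nonneg _) (hwpos x).le),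
              ENNReal.ofReal_mul (norm_nonneg _), ofReal_norm_eq_coe_nnnorm]
        _ ≤ (∫⁻ y, k x y * (‖F y‖₊ : ℝ≥0∞) ∂μ) * ENNReal.ofReal (w x) :=
            mul_le_mul_left (hG x) _
        _ = ∫⁻ y, k x y * (‖F y‖₊ : ℝ≥0∞) * ENNReal.ofReal (w x) ∂μ :=
            (lintegral_mul_const' _ _ ENNReal.ofReal_ne_top).symm
        _ ≤ ∫⁻ y, (k x y * ENNReal.ofReal (mw w x y)) *
              ((‖F y‖₊ : ℝ≥0∞) * ENNReal.ofReal (w y)) ∂μ := by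
            refine lintegral_mono fun y => ?_
            have h := ENNReal.ofReal_le_ofReal (hmw1 x y)
            rw [ENNReal.ofReal_mul (hmwnn x y)] at h
            calc k x y * (‖F y‖₊ : ℝ≥0∞) * ENNReal.ofReal (w x)
                ≤ k x y * (‖F y‖₊ : ℝ≥0∞) *
                  (ENNReal.ofReal (mw w x y) * ENNReal.ofReal (w y)) :=
                  mul_le_mul_right h _
              _ = k x y * ENNReal.ofReal (mw w x y) *
                  ((‖F y‖₊ : ℝ≥0∞) * ENNReal.ofReal (w y)) := by ring
    have hFeq : pN μ p (fun y => (‖F y‖₊ : ℝ≥0∞) * ENNReal.ofReal (w y))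
        = lpwNorm μ w p F := by
      rw [lpwNorm, eLpNorm_eq_pN _ p hp0]
      refine pN_congr_ae (Filter.Eventually.of_forall fun x => ?_)
      show ((‖F x‖₊ : ℝ≥0) : ℝ≥0∞) * ENNReal.ofReal (w x)
        = ((‖‖F x‖ * w x‖₊ : ℝ≥0) : ℝ≥0∞)
      rw [← ofReal_norm_eq_coe_nnnorm (‖F x‖ * w x),
        Real.norm_of_nonneg (mul_nonneg (norm_nonneg _) (hwpos x).le),
        ENNReal.ofReal_mul (norm_nonneg _), ofReal_norm_eq_coe_nnnorm]
    calc lpwNorm μ w p G ≤ pN μ p (fun x => ∫⁻ y,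
        (k x y * ENNReal.ofReal (mw w x y)) *
          ((‖F y‖₊ : ℝ≥0∞) * ENNReal.ofReal (w y)) ∂μ) := hGle
      _ ≤ c₀ * σ * pN μ p (fun y => (‖F y‖₊ : ℝ≥0∞) * ENNReal.ofReal (w y)) := hmain
      _ = c₀ * σ * lpwNorm μ w p F := by rw [hFeq]
  -- bound on overlaps
  have hcard : ∀ x : X, (∑' i, (𝒰.U i).indicator (fun _ => (1 : ℝ≥0∞)) x) ≤ (𝒰.N : ℝ≥0∞) := by
    intro x
    obtain ⟨j, hj⟩ := hcovx x
    have hfin : {i : I | x ∈ 𝒰.U i}.Finite :=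
      (𝒰.overlapFin j).subset fun i hi => ⟨x, hi, hj⟩
    rw [tsum_eq_sum (s := hfin.toFinset)
      (fun i hi => Set.indicator_of_notMem (by simpa using hi) _)]
    calc ∑ i ∈ hfin.toFinset, (𝒰.U i).indicator (fun _ => (1 : ℝ≥0∞)) x
        ≤ ∑ i ∈ hfin.toFinset, 1 := Finset.sum_le_sum fun i _ => by
          by_cases h : x ∈ 𝒰.U i
          · simp [h]
          · simp [h]
      _ = (hfin.toFinset.card : ℝ≥0∞) := by simp
      _ ≤ (𝒰.N : ℝ≥0∞) := by
          have h1 : hfin.toFinset.card = {i : I | x ∈ 𝒰.U i}.ncard :=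
            (Set.ncard_eq_toFinset_card _ hfin).symm
          have h2 : {i : I | x ∈ 𝒰.U i}.ncard
              ≤ {i : I | (𝒰.U i ∩ 𝒰.U j).Nonempty}.ncard :=
            Set.ncard_le_ncard (fun i hi => ⟨x, hi, hj⟩) (𝒰.overlapFin j)
          have h3 : hfin.toFinset.card ≤ 𝒰.N := by
            rw [h1]; exact h2.trans (𝒰.overlapBound j)
          exact_mod_cast h3
  constructor
  · -- indicator sampling estimate
    refine key (𝒰.N : ℝ≥0∞) (ENNReal.natCast_ne_top _)
      (fun x y => ∑' i, (𝒰.U i).indicator (fun _ => (1 : ℝ≥0∞)) x * (‖R' (pt i) y‖₊ : ℝ≥0∞))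
      ?_ ?_ _ ?_
    · refine Measurable.ennreal_tsum fun i => ?_
      exact ((measurable_const.indicator (𝒰.measU i)).comp measurable_fst).mul
        ((measurable_coe_nnreal_ennreal.comp (hRcont2 (pt i)).nnnorm.measurable).comp
          measurable_snd)
    · intro x y
      calc (∑' i, (𝒰.U i).indicator (fun _ => (1 : ℝ≥0∞)) x * (‖R' (pt i) y‖₊ : ℝ≥0∞))
          ≤ ∑' i, (𝒰.U i).indicator (fun _ => (1 : ℝ≥0∞)) x *
              ((‖R' x y‖₊ : ℝ≥0∞) + ENNReal.ofReal (oscU R' 𝒰.U y x)) := by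
            refine ENNReal.tsum_le_tsum fun i => ?_
            by_cases h : x ∈ 𝒰.U i
            · simpa [Set.indicator_of_mem h] using hosc3 i x y h
            · simp [Set.indicator_of_notMem h]
        _ = (∑' i, (𝒰.U i).indicator (fun _ => (1 : ℝ≥0∞)) x) *
              ((‖R' x y‖₊ : ℝ≥0∞) + ENNReal.ofReal (oscU R' 𝒰.U y x)) :=
            ENNReal.tsum_mul_right
        _ ≤ (𝒰.N : ℝ≥0∞) *
              ((‖R' x y‖₊ : ℝ≥0∞) + ENNReal.ofReal (oscU R' 𝒰.U y x)) :=
            mul_le_mul_left (hcard x) _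
    · intro x
      calc ((‖∑' i, (∫ y, F y * R' (pt i) y ∂μ) *
              (𝒰.U i).indicator (fun _ => (1:ℂ)) x‖₊ : ℝ≥0) : ℝ≥0∞)
          ≤ ∑' i, ((‖(∫ y, F y * R' (pt i) y ∂μ) *
              (𝒰.U i).indicator (fun _ => (1:ℂ)) x‖₊ : ℝ≥0) : ℝ≥0∞) := enorm_tsum_le' _
        _ ≤ ∑' i, (𝒰.U i).indicator (fun _ => (1 : ℝ≥0∞)) x *
              ∫⁻ y, (‖R' (pt i) y‖₊ : ℝ≥0∞) * (‖F y‖₊ : ℝ≥0∞) ∂μ := by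
            refine ENNReal.tsum_le_tsum fun i => ?_
            by_cases h : x ∈ 𝒰.U i
            · simp only [Set.indicator_of_mem h, mul_one, one_mul]
              calc ((‖∫ y, F y * R' (pt i) y ∂μ‖₊ : ℝ≥0) : ℝ≥0∞)
                  ≤ ∫⁻ y, (‖F y * R' (pt i) y‖₊ : ℝ≥0∞) ∂μ :=
                    enorm_integral_le_lintegral_enorm _
                _ = ∫⁻ y, (‖R' (pt i) y‖₊ : ℝ≥0∞) * (‖F y‖₊ : ℝ≥0∞) ∂μ := by
                    refine lintegral_congr fun y => ?_
                    rw [nnnorm_mul, ENNReal.coe_mul, mul_comm]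
            · simp [Set.indicator_of_notMem h]
        _ = ∑' i, ∫⁻ y, (𝒰.U i).indicator (fun _ => (1 : ℝ≥0∞)) x *
              (‖R' (pt i) y‖₊ : ℝ≥0∞) * (‖F y‖₊ : ℝ≥0∞) ∂μ := by
            refine tsum_congr fun i => ?_
            rw [← lintegral_const_mul' _ _ (by
              by_cases h : x ∈ 𝒰.U i
              · simp [Set.indicator_of_mem h]
              · simp [Set.indicator_of_notMem h])]
            refine lintegral_congr fun y => ?_
            ring
        _ = ∫⁻ y, (∑' i, (𝒰.U i).indicator (fun _ => (1 : ℝ≥0∞)) x *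
              (‖R' (pt i) y‖₊ : ℝ≥0∞)) * (‖F y‖₊ : ℝ≥0∞) ∂μ := by
            rw [← lintegral_tsum fun i => ?_]
            · refine lintegral_congr fun y => ?_
              rw [ENNReal.tsum_mul_right]
            · refine AEMeasurable.mul ?_ hFmeas.enorm
              exact (measurable_const.mul
                (measurable_coe_nnreal_ennreal.comp
                  (hRcont2 (pt i)).nnnorm.measurable)).aemeasurable
  · -- partition-of-unity sampling estimate
    have hφle : ∀ i x, φ i x ≠ 0 → x ∈ 𝒰.U i := fun i x h => hφsupp i h
    have hφsum1 : ∀ x, (∑' i, ENNReal.ofReal (φ i x)) = 1 := by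
      intro x
      rw [← ENNReal.ofReal_tsum_of_nonneg (fun i => hφ0 i x) (hφsum x).summable,
        (hφsum x).tsum_eq, ENNReal.ofReal_one]
    have hres := key 1 one_ne_top
      (fun x y => ∑' i, ENNReal.ofReal (φ i x) * (‖R' (pt i) y‖₊ : ℝ≥0∞))
      (by
        refine Measurable.ennreal_tsum fun i => ?_
        exact ((ENNReal.measurable_ofReal.comp (hφmeas i)).comp measurable_fst).mul
          ((measurable_coe_nnreal_ennreal.comp (hRcont2 (pt i)).nnnorm.measurable).comp
            measurable_snd))
      (by
        intro x y
        rw [one_mul]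
        calc (∑' i, ENNReal.ofReal (φ i x) * (‖R' (pt i) y‖₊ : ℝ≥0∞))
            ≤ ∑' i, ENNReal.ofReal (φ i x) *
                ((‖R' x y‖₊ : ℝ≥0∞) + ENNReal.ofReal (oscU R' 𝒰.U y x)) := by
              refine ENNReal.tsum_le_tsum fun i => ?_
              by_cases h : φ i x = 0
              · simp [h]
              · exact mul_le_mul_right (hosc3 i x y (hφle i x h)) _
          _ = (∑' i, ENNReal.ofReal (φ i x)) *
                ((‖R' x y‖₊ : ℝ≥0∞) + ENNReal.ofReal (oscU R' 𝒰.U y x)) :=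
              ENNReal.tsum_mul_right
          _ = (‖R' x y‖₊ : ℝ≥0∞) + ENNReal.ofReal (oscU R' 𝒰.U y x) := by
              rw [hφsum1 x, one_mul])
      (fun x => ∑' i, (∫ y, F y * R' (pt i) y ∂μ) * (φ i x : ℂ))
      (by
        intro x
        calc ((‖∑' i, (∫ y, F y * R' (pt i) y ∂μ) * (φ i x : ℂ)‖₊ : ℝ≥0) : ℝ≥0∞)
            ≤ ∑' i, ((‖(∫ y, F y * R' (pt i) y ∂μ) * (φ i x : ℂ)‖₊ : ℝ≥0) : ℝ≥0∞) :=
              enorm_tsum_le' _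
          _ ≤ ∑' i, ENNReal.ofReal (φ i x) *
                ∫⁻ y, (‖R' (pt i) y‖₊ : ℝ≥0∞) * (‖F y‖₊ : ℝ≥0∞) ∂μ := by
              refine ENNReal.tsum_le_tsum fun i => ?_
              have e1 : ((‖(φ i x : ℂ)‖₊ : ℝ≥0) : ℝ≥0∞) = ENNReal.ofReal (φ i x) := by
                rw [← ofReal_norm_eq_coe_nnnorm, Complex.norm_real,
                  Real.norm_of_nonneg (hφ0 i x)]
              rw [nnnorm_mul, ENNReal.coe_mul, e1, mul_comm]
              refine mul_le_mul_right ?_ _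
              calc ((‖∫ y, F y * R' (pt i) y ∂μ‖₊ : ℝ≥0) : ℝ≥0∞)
                  ≤ ∫⁻ y, (‖F y * R' (pt i) y‖₊ : ℝ≥0∞) ∂μ :=
                    enorm_integral_le_lintegral_enorm _
                _ = ∫⁻ y, (‖R' (pt i) y‖₊ : ℝ≥0∞) * (‖F y‖₊ : ℝ≥0∞) ∂μ := by
                    refine lintegral_congr fun y => ?_
                    rw [nnnorm_mul, ENNReal.coe_mul, mul_comm]
          _ = ∑' i, ∫⁻ y, ENNReal.ofReal (φ i x) *
                (‖R' (pt i) y‖₊ : ℝ≥0∞) * (‖F y‖₊ : ℝ≥0∞) ∂μ := by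
              refine tsum_congr fun i => ?_
              rw [← lintegral_const_mul' _ _ ENNReal.ofReal_ne_top]
              refine lintegral_congr fun y => ?_
              ring
          _ = ∫⁻ y, (∑' i, ENNReal.ofReal (φ i x) *
                (‖R' (pt i) y‖₊ : ℝ≥0∞)) * (‖F y‖₊ : ℝ≥0∞) ∂μ := by
              rw [← lintegral_tsum fun i => ?_]
              · refine lintegral_congr fun y => ?_
                rw [ENNReal.tsum_mul_right]
              · refine AEMeasurable.mul ?_ hFmeas.enorm
                exact (measurable_const.mul
                  (measurable_coe_nnreal_ennreal.comp
                    (hRcont2 (pt i)).nnnorm.measurable)).aemeasurable)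
    rw [one_mul] at hres
    exact hres
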